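/- Let n be a positive integer and let f : [0, n] → ℝ be continuous with f(0) = f(n). Then there exists x ∈ [0, n-1] with f(x+1) = f(x). -/
import Mathlib


theorem universal_chord_unit (n : ℕ) (hn : 0 < n) (f : ℝ → ℝ)
    (hf : ContinuousOn f (Set.Icc 0 (n : ℝ)))
    (hend : f 0 = f (n : ℝ)) :
    ∃ x ∈ Set.Icc (0 : ℝ) ((n : ℝ) - 1), f (x + 1) = f x := by
  set g : ℝ → ℝ := fun x => f (x + 1) - f x with hg
  have hn1 : (1 : ℝ) ≤ (n : ℝ) := by exact_mod_cast hn
  -- g is continuous on [0, n-1]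
  have hsub : Set.Icc (0 : ℝ) ((n : ℝ) - 1) ⊆ Set.Icc 0 (n : ℝ) := by
    apply Set.Icc_subset_Icc le_rfl; linarith
  have hgc : ContinuousOn g (Set.Icc 0 ((n : ℝ) - 1)) := by
    apply ContinuousOn.sub
    · apply hf.comp (continuous_add_right 1).continuousOn
      intro x hx
      simp only [Set.mem_Icc] at hx ⊢
      constructor <;> linarith [hx.1, hx.2]
    · exact hf.mono hsub
  -- telescoping sum of g over integer points is 0
  have hsum : ∑ k ∈ Finset.range n, g (k : ℝ) = 0 := by
    have := Finset.sum_range_sub (fun k : ℕ => f (k : ℝ)) n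
    simp only [hg]
    have heq : ∀ k ∈ Finset.range n, f ((k : ℝ) + 1) - f (k : ℝ)
        = f ((k + 1 : ℕ) : ℝ) - f (k : ℝ) := by
      intro k _; push_cast; ring_nf
    rw [Finset.sum_congr rfl heq, this]
    simp [hend]
  have hne : (Finset.range n).Nonempty := Finset.nonempty_range_iff.mpr hn.ne'
  -- exists i with g i ≤ 0
  have hile : ∃ i ∈ Finset.range n, g (i : ℝ) ≤ 0 := by
    by_contra h
    push_neg at h
    have : (0 : ℝ) < ∑ k ∈ Finset.range n, g (k : ℝ) :=
      Finset.sum_pos (fun k hk => h k hk) hne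
    linarith [hsum]
  have hjge : ∃ j ∈ Finset.range n, 0 ≤ g (j : ℝ) := by
    by_contra h
    push_neg at h
    have : ∑ k ∈ Finset.range n, g (k : ℝ) < 0 :=
      Finset.sum_neg (fun k hk => h k hk) hne
    linarith [hsum]
  obtain ⟨i, hi, hgi⟩ := hile
  obtain ⟨j, hj, hgj⟩ := hjge
  have hmem : ∀ k ∈ Finset.range n, (k : ℝ) ∈ Set.Icc (0 : ℝ) ((n : ℝ) - 1) := by
    intro k hk
    rw [Finset.mem_range] at hk
    have : (k : ℝ) ≤ (n : ℝ) - 1 := by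
      have : (k : ℝ) + 1 ≤ (n : ℝ) := by exact_mod_cast Nat.succ_le_of_lt hk
      linarith
    exact ⟨Nat.cast_nonneg k, this⟩
  have hiuIcc : Set.uIcc ((i : ℝ)) ((j : ℝ)) ⊆ Set.Icc (0 : ℝ) ((n : ℝ) - 1) :=
    (Set.ordConnected_Icc).uIcc_subset (hmem i hi) (hmem j hj)
  have hivt := intermediate_value_uIcc (hgc.mono hiuIcc)
  have h0 : (0 : ℝ) ∈ Set.uIcc (g (i : ℝ)) (g (j : ℝ)) := by
    rw [Set.mem_uIcc]; left; exact ⟨hgi, hgj⟩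
  obtain ⟨x, hx, hgx⟩ := hivt h0
  exact ⟨x, hiuIcc hx, by have := hgx; simp only [hg] at this; linarith⟩
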